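/- Let π* : ℝ[X] → ℝ[Y] be an injective ℝ-algebra homomorphism between real affine rings making ℝ[Y] a finite ℝ[X]-module. Then the following are equivalent: (i) π* is Rmax-subintegral; (ii) for every ℝ-algebra homomorphism φ : ℝ[X] → ℝ there exists a unique ℝ-algebra homomorphism ψ : ℝ[Y] → ℂ with ψ ∘ π* = ι ∘ φ; (iii) the map ψ ↦ ψ ∘ π* is a bijection from the set of ℝ-algebra homomorphisms ℝ[Y] → ℝ onto the set of ℝ-algebra homomorphisms ℝ[X] → ℝ, and every ℝ-algebra homomorphism ψ : ℝ[Y] → ℂ such that ψ ∘ π* takes values in ℝ ⊆ ℂ itself takes values in ℝ ⊆ ℂ. -/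

import Mathlib

/-- An ideal `I` of a commutative ring is *real* if whenever a finite sum of squares
of elements lies in `I`, then each of these elements lies in `I`. -/
def Ideal.IsRealIdeal {A : Type*} [CommRing A] (I : Ideal A) : Prop :=
  ∀ (n : ℕ) (a : Fin n → A), (∑ i, a i ^ 2) ∈ I → ∀ i, a i ∈ I

/-- An integral extension `φ : A → B` is *R-subintegral* if for every real prime ideal `p`
of `A` there is exactly one prime ideal `q` of `B` lying over `p`, this `q` is a real ideal,
and the induced map of residue fields `κ(p) → κ(q)` is an isomorphism.  (The residue-field
isomorphism is expressed by its surjectivity: every `b : B` is congruent mod `q` to a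
fraction `a/s` with `a s : A`, `s ∉ p`; injectivity is automatic for fields.) -/
def RSubintegral {A B : Type*} [CommRing A] [CommRing B] (φ : A →+* B) : Prop :=
  ∀ p : Ideal A, p.IsPrime → p.IsRealIdeal →
    (∃! q : Ideal B, q.IsPrime ∧ q.comap φ = p) ∧
    ∀ q : Ideal B, q.IsPrime → q.comap φ = p →
      q.IsRealIdeal ∧ ∀ b : B, ∃ a s : A, s ∉ p ∧ φ s * b - φ a ∈ q

/-- An integral extension `φ : A → B` is *Rmax-subintegral* if for every real maximal ideal
`m` of `A` there is exactly one prime ideal `q` of `B` lying over `m`, this `q` is a real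
maximal ideal, and the induced map of residue fields `κ(m) → κ(q)` is an isomorphism
(expressed via surjectivity, as in `RSubintegral`). -/
def RmaxSubintegral {A B : Type*} [CommRing A] [CommRing B] (φ : A →+* B) : Prop :=
  ∀ m : Ideal A, m.IsMaximal → m.IsRealIdeal →
    (∃! q : Ideal B, q.IsPrime ∧ q.comap φ = m) ∧
    ∀ q : Ideal B, q.IsPrime → q.comap φ = m →
      q.IsMaximal ∧ q.IsRealIdeal ∧ ∀ b : B, ∃ a s : A, s ∉ m ∧ φ s * b - φ a ∈ q

section Aux

variable {A B : Type*} [CommRing A] [CommRing B] [Algebra ℝ A] [Algebra ℝ B]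

lemma sum_sq_eq_zero_real {n : ℕ} {f : Fin n → ℝ} (h : ∑ i, f i ^ 2 = 0) (i : Fin n) :
    f i = 0 := by
  have := (Finset.sum_eq_zero_iff_of_nonneg (fun i _ => sq_nonneg (f i))).mp h i
    (Finset.mem_univ i)
  exact (pow_eq_zero_iff (by norm_num : (2:ℕ) ≠ 0)).mp this

lemma exists_real_restrict (ψ : B →ₐ[ℝ] ℂ) (h : ∀ b, ∃ r : ℝ, ψ b = (r : ℂ)) :
    ∃ ψ' : B →ₐ[ℝ] ℝ, ∀ b, ((ψ' b : ℝ) : ℂ) = ψ b := by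
  refine ⟨{ toFun := fun b => (ψ b).re
            map_one' := by simp
            map_mul' := fun x y => by
              obtain ⟨r, hr⟩ := h x; obtain ⟨s, hs⟩ := h y
              show (ψ (x*y)).re = (ψ x).re * (ψ y).re
              rw [map_mul, hr, hs]; simp
            map_zero' := by simp
            map_add' := fun x y => by show (ψ (x+y)).re = (ψ x).re + (ψ y).re; simp
            commutes' := fun r => by show (ψ (algebraMap ℝ B r)).re = _; simp }, fun b => ?_⟩
  obtain ⟨r, hr⟩ := h b
  simp [hr]


lemma ker_algHom_isMaximal (φ : A →ₐ[ℝ] ℝ) : (RingHom.ker φ.toRingHom).IsMaximal :=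
  RingHom.ker_isMaximal_of_surjective _
    (fun r => ⟨algebraMap ℝ A r, (φ.commutes r).trans (Algebra.algebraMap_self_apply r)⟩)

lemma ker_algHom_isReal (φ : A →ₐ[ℝ] ℝ) : (RingHom.ker φ.toRingHom).IsRealIdeal := by
  intro n a h i
  rw [RingHom.mem_ker] at h
  have h2 : ∑ j, φ (a j) ^ 2 = 0 := by
    rw [← h]; show _ = φ.toRingHom _
    rw [map_sum]; simp [map_pow]
  exact RingHom.mem_ker.mpr (sum_sq_eq_zero_real h2 i)

lemma exists_algHom_complex_of_isMaximal [Algebra.FiniteType ℝ B] (q : Ideal B)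
    (hq : q.IsMaximal) : ∃ ψ : B →ₐ[ℝ] ℂ, RingHom.ker ψ.toRingHom = q := by
  haveI := hq
  letI : Field (B ⧸ q) := Ideal.Quotient.field q
  haveI : Algebra.FiniteType ℝ (B ⧸ q) :=
    Algebra.FiniteType.of_surjective (Ideal.Quotient.mkₐ ℝ q)
      (Ideal.Quotient.mkₐ_surjective ℝ q)
  haveI : Module.Finite ℝ (B ⧸ q) := finite_of_finite_type_of_isJacobsonRing ℝ _
  haveI : NoZeroSMulDivisors ℝ (B ⧸ q) :=
    inferInstance
  let j : (B ⧸ q) →ₐ[ℝ] ℂ := IsAlgClosed.lift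
  have hjinj : Function.Injective j := j.toRingHom.injective
  refine ⟨j.comp (Ideal.Quotient.mkₐ ℝ q), ?_⟩
  ext b
  rw [RingHom.mem_ker]
  show j (Ideal.Quotient.mk q b) = 0 ↔ b ∈ q
  rw [show (0 : ℂ) = j 0 by simp, hjinj.eq_iff, eq_comm, ← Ideal.Quotient.eq_zero_iff_mem, eq_comm]


lemma exists_algHom_real_of_isReal [Algebra.FiniteType ℝ A]
    (m : Ideal A) (hm : m.IsMaximal) (hr : m.IsRealIdeal) :
    ∃ φ : A →ₐ[ℝ] ℝ, RingHom.ker φ.toRingHom = m := by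
  haveI := hm
  letI : Field (A ⧸ m) := Ideal.Quotient.field m
  haveI : Algebra.FiniteType ℝ (A ⧸ m) :=
    Algebra.FiniteType.of_surjective (Ideal.Quotient.mkₐ ℝ m)
      (Ideal.Quotient.mkₐ_surjective ℝ m)
  haveI : Module.Finite ℝ (A ⧸ m) := finite_of_finite_type_of_isJacobsonRing ℝ _
  haveI : NoZeroSMulDivisors ℝ (A ⧸ m) :=
    inferInstance
  let j : (A ⧸ m) →ₐ[ℝ] ℂ := IsAlgClosed.lift
  have hjinj : Function.Injective j := j.toRingHom.injective
  set ψ : A →ₐ[ℝ] ℂ := j.comp (Ideal.Quotient.mkₐ ℝ m) with hψdef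
  have hkermem : ∀ x : A, ψ x = 0 ↔ x ∈ m := by
    intro x
    show j (Ideal.Quotient.mk m x) = 0 ↔ x ∈ m
    rw [show (0 : ℂ) = j 0 by simp, hjinj.eq_iff, eq_comm, ← Ideal.Quotient.eq_zero_iff_mem,
      eq_comm]
  have hreal : ∀ a : A, ∃ r : ℝ, ψ a = (r : ℂ) := by
    intro a
    set z := ψ a with hz
    refine ⟨z.re, ?_⟩
    have him : z.im = 0 := by
      by_contra him
      set y : A := a - algebraMap ℝ A z.re with hy
      have hzy : ψ y = (z.im : ℂ) * Complex.I := by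
        rw [hy, map_sub, AlgHom.commutes, ← hz]
        have := Complex.re_add_im z
        show z - algebraMap ℝ ℂ z.re = (z.im : ℂ) * Complex.I
        rw [Complex.coe_algebraMap]
        linear_combination (-1 : ℂ) * this
      have h1 : ψ (y ^ 2 + algebraMap ℝ A z.im ^ 2) = 0 := by
        rw [map_add, map_pow, map_pow, hzy, AlgHom.commutes]
        rw [Complex.coe_algebraMap]
        have : Complex.I ^ 2 = -1 := Complex.I_sq
        linear_combination ((z.im : ℂ))^2 * this
      have h2 : (∑ i, (![y, algebraMap ℝ A z.im] i) ^ 2) ∈ m := by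
        rw [Fin.sum_univ_two]
        have := (hkermem _).mp h1
        simpa using this
      have h4 := hr 2 _ h2 1
      have h5 : ψ (algebraMap ℝ A z.im) = 0 := (hkermem _).mpr (by simpa using h4)
      rw [AlgHom.commutes, Complex.coe_algebraMap] at h5
      exact him (by exact_mod_cast h5)
    exact Complex.ext (by simp) (by simp [him])
  obtain ⟨φ, hφ⟩ := exists_real_restrict ψ hreal
  refine ⟨φ, ?_⟩
  ext a
  rw [RingHom.mem_ker]
  show φ a = 0 ↔ a ∈ m
  rw [← hkermem a, ← hφ a]
  exact ⟨fun h => by rw [h]; simp, fun h => by exact_mod_cast h⟩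


lemma exists_algHom_of_residue_surj (π : A →ₐ[ℝ] B) (φ : A →ₐ[ℝ] ℝ) (q : Ideal B)
    (hq : q.IsPrime) (hc : ∀ a : A, π a ∈ q ↔ φ a = 0)
    (hs : ∀ b : B, ∃ a s : A, φ s ≠ 0 ∧ π s * b - π a ∈ q) :
    ∃ ψ : B →ₐ[ℝ] ℝ, ∀ a : A, ψ (π a) = φ a := by
  choose u v hv hmem using hs
  set f : B → ℝ := fun b => φ (u b) / φ (v b) with hf
  have wd : ∀ (b : B) (a s : A), φ s ≠ 0 → π s * b - π a ∈ q → f b = φ a / φ s := by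
    intro b a s hsne hm
    have h2 : π (v b * a - s * u b) ∈ q := by
      have hid : π (v b * a - s * u b) =
          π s * (π (v b) * b - π (u b)) - π (v b) * (π s * b - π a) := by
        simp only [map_sub, map_mul]; ring
      rw [hid]
      exact q.sub_mem (Ideal.mul_mem_left q _ (hmem b)) (Ideal.mul_mem_left q _ hm)
    have h3 : φ (v b * a - s * u b) = 0 := (hc _).mp h2
    rw [map_sub, map_mul, map_mul] at h3
    rw [hf]
    rw [div_eq_div_iff (hv b) hsne]
    linear_combination (-1 : ℝ) * h3
  have hone : φ (1 : A) ≠ 0 := by simp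
  refine ⟨{ toFun := f
            map_one' := by
              have := wd 1 1 1 hone (by simp)
              simpa using this
            map_mul' := fun x y => by
              have hmul : π (v x * v y) * (x * y) - π (u x * u y) =
                  (π (v x) * x - π (u x)) * (π (v y) * y) +
                    π (u x) * (π (v y) * y - π (u y)) := by
                simp only [map_mul]; ring
              have := wd (x * y) (u x * u y) (v x * v y)
                (by rw [map_mul]; exact mul_ne_zero (hv x) (hv y))
                (by rw [hmul]
                    exact q.add_mem (Ideal.mul_mem_right _ q (hmem x))
                      (Ideal.mul_mem_left q _ (hmem y)))
              show f (x * y) = f x * f y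
              rw [this, map_mul, map_mul]
              rw [hf]
              exact (div_mul_div_comm _ _ _ _).symm
            map_zero' := by
              have := wd 0 0 1 hone (by simp)
              simpa using this
            map_add' := fun x y => by
              have hadd : π (v x * v y) * (x + y) - π (v y * u x + v x * u y) =
                  π (v y) * (π (v x) * x - π (u x)) + π (v x) * (π (v y) * y - π (u y)) := by
                simp only [map_mul, map_add]; ring
              have := wd (x + y) (v y * u x + v x * u y) (v x * v y)
                (by rw [map_mul]; exact mul_ne_zero (hv x) (hv y))
                (by rw [hadd]
                    exact q.add_mem (Ideal.mul_mem_left q _ (hmem x))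
                      (Ideal.mul_mem_left q _ (hmem y)))
              show f (x + y) = f x + f y
              rw [this, map_add, map_mul, map_mul, map_mul]
              rw [hf]
              show _ = φ (u x) / φ (v x) + φ (u y) / φ (v y)
              rw [div_add_div _ _ (hv x) (hv y), div_eq_div_iff (mul_ne_zero (hv x) (hv y)) (mul_ne_zero (hv x) (hv y))]
              ring
            commutes' := fun r => by
              have := wd (algebraMap ℝ B r) (algebraMap ℝ A r) 1 hone
                (by rw [map_one, one_mul, AlgHom.commutes, sub_self]
                    exact q.zero_mem)
              simpa [AlgHom.commutes] using this }, fun a => ?_⟩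
  have := wd (π a) a 1 hone (by rw [map_one, one_mul, sub_self]; exact q.zero_mem)
  simpa using this

end Aux

/-- For an injective finite ℝ-algebra homomorphism `π : ℝ[X] → ℝ[Y]` between real affine
rings, the following are equivalent: (i) `π` is Rmax-subintegral; (ii) over each real closed
point of `X` (ℝ-algebra homomorphism `ℝ[X] → ℝ`) there is exactly one complex closed point
of `Y` (ℝ-algebra homomorphism `ℝ[Y] → ℂ`); (iii) `ψ ↦ ψ ∘ π` is a bijection on real closed
points, and every complex closed point of `Y` lying over a real closed point of `X` is real. -/



theorem rmaxSubintegral_iff_points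
    {A B : Type*} [CommRing A] [CommRing B] [Algebra ℝ A] [Algebra ℝ B]
    [Algebra.FiniteType ℝ A] [Algebra.FiniteType ℝ B] [IsReduced A] [IsReduced B]
    (hA : (⊥ : Ideal A).IsRealIdeal) (hB : (⊥ : Ideal B).IsRealIdeal)
    (π : A →ₐ[ℝ] B) (hinj : Function.Injective π) (hfin : π.toRingHom.Finite) :
    (RmaxSubintegral π.toRingHom ↔
      ∀ φ : A →ₐ[ℝ] ℝ, ∃! ψ : B →ₐ[ℝ] ℂ, ∀ a : A, ψ (π a) = (φ a : ℂ)) ∧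
    (RmaxSubintegral π.toRingHom ↔
      (Function.Bijective (fun ψ : B →ₐ[ℝ] ℝ => ψ.comp π) ∧
        ∀ ψ : B →ₐ[ℝ] ℂ, (∀ a : A, ∃ r : ℝ, ψ (π a) = (r : ℂ)) →
          ∀ b : B, ∃ r : ℝ, ψ b = (r : ℂ))) := by
  have hint : π.toRingHom.IsIntegral := hfin.to_isIntegral
  have key : RmaxSubintegral π.toRingHom ↔
      ∀ φ : A →ₐ[ℝ] ℝ, ∃! ψ : B →ₐ[ℝ] ℂ, ∀ a : A, ψ (π a) = (φ a : ℂ) := by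
    constructor
    · -- (i) → (ii)
      intro H φ
      have hmmax : (RingHom.ker φ.toRingHom).IsMaximal := ker_algHom_isMaximal φ
      have hmreal := ker_algHom_isReal φ
      obtain ⟨⟨q, ⟨hqprime, hqcomap⟩, hquniq⟩, hall⟩ := H _ hmmax hmreal
      obtain ⟨-, -, hsurj⟩ := hall q hqprime hqcomap
      have hcq : ∀ a : A, π a ∈ q ↔ φ a = 0 := by
        intro a
        rw [show (φ a = 0) ↔ a ∈ RingHom.ker φ.toRingHom from RingHom.mem_ker.symm, ← hqcomap]
        exact Iff.rfl
      have hs : ∀ b, ∃ a s : A, φ s ≠ 0 ∧ π s * b - π a ∈ q := by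
        intro b
        obtain ⟨a, s, hs1, hs2⟩ := hsurj b
        exact ⟨a, s, fun h0 => hs1 (RingHom.mem_ker.mpr h0), hs2⟩
      obtain ⟨ψ₀, hψ₀⟩ := exists_algHom_of_residue_surj π φ q hqprime hcq hs
      have hker : ∀ ψ : B →ₐ[ℝ] ℂ, (∀ a : A, ψ (π a) = (φ a : ℂ)) →
          RingHom.ker ψ.toRingHom = q := by
        intro ψ hψ
        refine hquniq _ ⟨RingHom.ker_isPrime _, ?_⟩
        ext a
        simp only [Ideal.mem_comap, RingHom.mem_ker]
        show ψ (π a) = 0 ↔ φ a = 0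
        rw [hψ a]
        exact_mod_cast Iff.rfl
      have hcand : ∀ a : A, (Complex.ofRealAm.comp ψ₀) (π a) = (φ a : ℂ) := by
        intro a
        show ((ψ₀ (π a) : ℝ) : ℂ) = (φ a : ℂ)
        rw [hψ₀ a]
      refine ⟨Complex.ofRealAm.comp ψ₀, hcand, fun ψ hψ => ?_⟩
      have hkψ := hker ψ hψ
      have hk₀ := hker _ hcand
      apply AlgHom.ext; intro b
      obtain ⟨a, s, hs1, hs2⟩ := hs b
      have e1 : ψ (π s * b - π a) = 0 := by
        have : π s * b - π a ∈ RingHom.ker ψ.toRingHom := hkψ.symm ▸ hs2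
        exact RingHom.mem_ker.mp this
      have e2 : (Complex.ofRealAm.comp ψ₀) (π s * b - π a) = 0 := by
        have : π s * b - π a ∈ RingHom.ker (Complex.ofRealAm.comp ψ₀).toRingHom :=
          hk₀.symm ▸ hs2
        exact RingHom.mem_ker.mp this
      rw [map_sub, map_mul, hψ s, hψ a] at e1
      rw [map_sub, map_mul, hcand s, hcand a] at e2
      have hφs : (φ s : ℂ) ≠ 0 := by exact_mod_cast hs1
      apply mul_left_cancel₀ hφs
      rw [sub_eq_zero.mp e1, sub_eq_zero.mp e2]
    · -- (ii) → (i)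
      intro H m hmmax hmreal
      obtain ⟨φ, hφker⟩ := exists_algHom_real_of_isReal m hmmax hmreal
      obtain ⟨ψ₀, hψ₀, huniq⟩ := H φ
      have build : ∀ q : Ideal B, q.IsPrime → q.comap π.toRingHom = m →
          ∃ ψ : B →ₐ[ℝ] ℂ, RingHom.ker ψ.toRingHom = q ∧ ∀ a, ψ (π a) = (φ a : ℂ) := by
        intro q hq hqc
        have hqmax : q.IsMaximal :=
          Ideal.isMaximal_of_isIntegral_of_isMaximal_comap' π.toRingHom hint q
            (hqc ▸ hmmax)
        obtain ⟨ψ, hker⟩ := exists_algHom_complex_of_isMaximal q hqmax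
        refine ⟨ψ, hker, fun a => ?_⟩
        have h1 : a - algebraMap ℝ A (φ a) ∈ m := by
          rw [← hφker, RingHom.mem_ker]
          show φ (a - algebraMap ℝ A (φ a)) = 0
          rw [map_sub, AlgHom.commutes]
          simp
        have h2 : π a - algebraMap ℝ B (φ a) ∈ q := by
          rw [← hqc] at h1
          have := h1
          rw [Ideal.mem_comap] at this
          show π a - algebraMap ℝ B (φ a) ∈ q
          have heq : π.toRingHom (a - algebraMap ℝ A (φ a)) = π a - algebraMap ℝ B (φ a) := by
            show π (a - algebraMap ℝ A (φ a)) = _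
            rw [map_sub, AlgHom.commutes]
          rwa [heq] at this
        have h3 : ψ (π a - algebraMap ℝ B (φ a)) = 0 := by
          have : π a - algebraMap ℝ B (φ a) ∈ RingHom.ker ψ.toRingHom := hker.symm ▸ h2
          exact RingHom.mem_ker.mp this
        rw [map_sub, AlgHom.commutes] at h3
        have := sub_eq_zero.mp h3
        rw [this, Complex.coe_algebraMap]
      have hker0comap : (RingHom.ker ψ₀.toRingHom).comap π.toRingHom = m := by
        rw [← hφker]
        ext a
        simp only [Ideal.mem_comap, RingHom.mem_ker]
        show ψ₀ (π a) = 0 ↔ φ a = 0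
        rw [hψ₀ a]
        exact_mod_cast Iff.rfl
      constructor
      · refine ⟨RingHom.ker ψ₀.toRingHom, ⟨RingHom.ker_isPrime _, hker0comap⟩, ?_⟩
        rintro q ⟨hq, hqc⟩
        obtain ⟨ψ, hker, hlift⟩ := build q hq hqc
        rw [← hker, huniq ψ hlift]
      · intro q hq hqc
        have hqmax : q.IsMaximal :=
          Ideal.isMaximal_of_isIntegral_of_isMaximal_comap' π.toRingHom hint q
            (hqc ▸ hmmax)
        obtain ⟨ψ, hker, hlift⟩ := build q hq hqc
        have hconj : Complex.conjAe.toAlgHom.comp ψ = ψ := by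
          have hc1 := huniq (Complex.conjAe.toAlgHom.comp ψ) (fun a => by
            show (starRingEnd ℂ) (ψ (π a)) = (φ a : ℂ)
            rw [hlift a, Complex.conj_ofReal])
          exact hc1.trans (huniq ψ hlift).symm
        have hrealval : ∀ b : B, ∃ r : ℝ, ψ b = (r : ℂ) := by
          intro b
          have h := AlgHom.congr_fun hconj b
          have h' : (starRingEnd ℂ) (ψ b) = ψ b := h
          exact Complex.conj_eq_iff_real.mp h'
        refine ⟨hqmax, ?_, ?_⟩
        · intro n g hg i
          choose r hr using fun i => hrealval (g i)
          have h0 : ψ (∑ i, g i ^ 2) = 0 := by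
            have : (∑ i, g i ^ 2) ∈ RingHom.ker ψ.toRingHom := hker.symm ▸ hg
            exact RingHom.mem_ker.mp this
          have h1 : ∑ i, (r i : ℂ) ^ 2 = 0 := by
            rw [← h0, map_sum]
            exact Finset.sum_congr rfl fun i _ => by rw [map_pow, hr i]
          have h2 : ∑ i, r i ^ 2 = (0 : ℝ) := by exact_mod_cast (by push_cast at h1 ⊢; exact_mod_cast h1 : ((∑ i, r i ^ 2 : ℝ) : ℂ) = 0)
          have h3 := sum_sq_eq_zero_real h2 i
          rw [← hker, RingHom.mem_ker]
          show ψ (g i) = 0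
          rw [hr i, h3]
          simp
        · intro b
          obtain ⟨r, hr⟩ := hrealval b
          refine ⟨algebraMap ℝ A r, 1, fun h1 => hmmax.ne_top ((Ideal.eq_top_iff_one m).mpr h1), ?_⟩
          rw [← hker, RingHom.mem_ker]
          show ψ (π 1 * b - π (algebraMap ℝ A r)) = 0
          have h1 : π (1 : A) = 1 := map_one π
          rw [h1, one_mul, map_sub, hr, hlift (algebraMap ℝ A r), AlgHom.commutes]
          simp
  have formal : (∀ φ : A →ₐ[ℝ] ℝ, ∃! ψ : B →ₐ[ℝ] ℂ, ∀ a : A, ψ (π a) = (φ a : ℂ)) ↔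
      (Function.Bijective (fun ψ : B →ₐ[ℝ] ℝ => ψ.comp π) ∧
        ∀ ψ : B →ₐ[ℝ] ℂ, (∀ a : A, ∃ r : ℝ, ψ (π a) = (r : ℂ)) →
          ∀ b : B, ∃ r : ℝ, ψ b = (r : ℂ)) := by
    constructor
    · intro H
      have conj_trick : ∀ (φ : A →ₐ[ℝ] ℝ) (ψ : B →ₐ[ℝ] ℂ), (∀ a, ψ (π a) = (φ a : ℂ)) →
          ∀ b : B, ∃ r : ℝ, ψ b = (r : ℂ) := by
        intro φ ψ hψ b
        obtain ⟨Ψ, hΨ, hu⟩ := H φ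
        have e1 : ψ = Ψ := hu ψ hψ
        have e2 : Complex.conjAe.toAlgHom.comp ψ = Ψ := hu _ (fun a => by
          show (starRingEnd ℂ) (ψ (π a)) = (φ a : ℂ)
          rw [hψ a, Complex.conj_ofReal])
        have h := AlgHom.congr_fun (e2.trans e1.symm) b
        have h' : (starRingEnd ℂ) (ψ b) = ψ b := h
        exact Complex.conj_eq_iff_real.mp h'
      refine ⟨⟨?_, ?_⟩, ?_⟩
      · intro ψ₁ ψ₂ h12
        obtain ⟨Ψ, hΨ, hu⟩ := H (ψ₁.comp π)
        have e1 : Complex.ofRealAm.comp ψ₁ = Ψ := hu _ (fun a => rfl)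
        have e2 : Complex.ofRealAm.comp ψ₂ = Ψ := hu _ (fun a => by
          show ((ψ₂ (π a) : ℝ) : ℂ) = ((ψ₁ (π a) : ℝ) : ℂ)
          rw [show ψ₂ (π a) = ψ₁ (π a) from (AlgHom.congr_fun h12 a).symm])
        apply AlgHom.ext; intro b
        have h2 : ((ψ₁ b : ℝ) : ℂ) = ((ψ₂ b : ℝ) : ℂ) := AlgHom.congr_fun (e1.trans e2.symm) b
        exact_mod_cast h2
      · intro φ
        obtain ⟨Ψ, hΨ, hu⟩ := H φ
        obtain ⟨ψ', hψ'⟩ := exists_real_restrict Ψ (conj_trick φ Ψ hΨ)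
        refine ⟨ψ', ?_⟩
        apply AlgHom.ext; intro a
        have : ((ψ' (π a) : ℝ) : ℂ) = (φ a : ℂ) := by rw [hψ' (π a), hΨ a]
        exact_mod_cast this
      · intro ψ hreal b
        obtain ⟨φ, hφ⟩ := exists_real_restrict (ψ.comp π) hreal
        exact conj_trick φ ψ (fun a => (hφ a).symm) b
    · rintro ⟨⟨hinj', hsurj'⟩, hreal'⟩ φ
      obtain ⟨ψ', hψ'⟩ := hsurj' φ
      have hcand : ∀ a : A, (Complex.ofRealAm.comp ψ') (π a) = (φ a : ℂ) := by
        intro a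
        show ((ψ' (π a) : ℝ) : ℂ) = (φ a : ℂ)
        rw [show ψ' (π a) = φ a from AlgHom.congr_fun hψ' a]
      refine ⟨Complex.ofRealAm.comp ψ', hcand, fun ψ hψ => ?_⟩
      have hrv : ∀ b, ∃ r : ℝ, ψ b = (r : ℂ) := hreal' ψ (fun a => ⟨φ a, hψ a⟩)
      obtain ⟨ψ'', hψ''⟩ := exists_real_restrict ψ hrv
      have hc : ψ''.comp π = φ := by
        apply AlgHom.ext; intro a
        have : ((ψ'' (π a) : ℝ) : ℂ) = (φ a : ℂ) := by rw [hψ'' (π a), hψ a]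
        exact_mod_cast this
      have e := hinj' (hc.trans hψ'.symm)
      apply AlgHom.ext; intro b
      rw [← hψ'' b, e]
      rfl
  exact ⟨key, key.trans formal⟩
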